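/- Let q be a real polynomial of degree d, let a < b be integers, and let ξ ∈ [a,b] be real. If |q(i)| ≤ 1 for every integer i in [a,b], and |q(⌊ξ⌋) - q(ξ)| ≥ c > 0, then d ≥ C·√(b - a) for some constant C > 0 depending only on c. -/

import Mathlib

open Polynomial Metric Set Complex Bornology

section PaturiAux


/-- Two-point Cauchy bound. -/
lemma twoPoint (p : Polynomial ℂ) (x₀ : ℂ) (R M' : ℝ) (hR : 0 < R)
    (hbd : ∀ z ∈ sphere x₀ R, ‖p.eval z‖ ≤ M')
    (z₁ z₂ : ℂ) (h₁ : ‖z₁ - x₀‖ ≤ R/2) (h₂ : ‖z₂ - x₀‖ ≤ R/2) :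
    ‖p.eval z₁ - p.eval z₂‖ ≤ 4 * M' * ‖z₁ - z₂‖ / R := by
  have hdc : DiffContOnCl ℂ (fun z => p.eval z) (ball x₀ R) :=
    (p.differentiable).diffContOnCl
  have hz₁ : z₁ ∈ ball x₀ R := by
    rw [mem_ball, dist_eq_norm]; linarith
  have hz₂ : z₂ ∈ ball x₀ R := by
    rw [mem_ball, dist_eq_norm]; linarith
  have c₁ := hdc.circleIntegral_sub_inv_smul hz₁
  have c₂ := hdc.circleIntegral_sub_inv_smul hz₂
  -- integrands integrable
  have hi : ∀ w : ℂ, ‖w - x₀‖ ≤ R/2 → CircleIntegrable (fun z => (z - w)⁻¹ • p.eval z) x₀ R := by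
    intro w hw
    apply ContinuousOn.circleIntegrable hR.le
    apply ContinuousOn.fun_smul
    · apply ContinuousOn.inv₀ (by fun_prop)
      intro z hz
      have hz' : ‖z - x₀‖ = R := by
        rw [mem_sphere, dist_eq_norm] at hz; exact hz
      have : R/2 ≤ ‖z - w‖ := by
        have := norm_sub_norm_le (z - x₀) (w - x₀)
        have h3 : (z - x₀) - (w - x₀) = z - w := by ring
        rw [h3] at this; linarith
      intro h0
      rw [h0, norm_zero] at this; linarith
    · fun_prop
  have hsub : (∮ z in C(x₀, R), ((z - z₁)⁻¹ • p.eval z - (z - z₂)⁻¹ • p.eval z))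
      = (2 * Real.pi * I : ℂ) • p.eval z₁ - (2 * Real.pi * I : ℂ) • p.eval z₂ := by
    rw [circleIntegral.integral_sub (hi z₁ h₁) (hi z₂ h₂), c₁, c₂]
  have hbound : ‖∮ z in C(x₀, R), ((z - z₁)⁻¹ • p.eval z - (z - z₂)⁻¹ • p.eval z)‖
      ≤ 2 * Real.pi * R * (M' * ‖z₁ - z₂‖ / (R/2)^2) := by
    apply circleIntegral.norm_integral_le_of_norm_le_const hR.le
    intro z hz
    have hz' : ‖z - x₀‖ = R := by rw [mem_sphere, dist_eq_norm] at hz; exact hz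
    have hd1 : R/2 ≤ ‖z - z₁‖ := by
      have := norm_sub_norm_le (z - x₀) (z₁ - x₀)
      have h3 : (z - x₀) - (z₁ - x₀) = z - z₁ := by ring
      rw [h3] at this; linarith
    have hd2 : R/2 ≤ ‖z - z₂‖ := by
      have := norm_sub_norm_le (z - x₀) (z₂ - x₀)
      have h3 : (z - x₀) - (z₂ - x₀) = z - z₂ := by ring
      rw [h3] at this; linarith
    have hne1 : z - z₁ ≠ 0 := by
      intro hh; rw [hh, norm_zero] at hd1; linarith
    have hne2 : z - z₂ ≠ 0 := by
      intro hh; rw [hh, norm_zero] at hd2; linarith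
    have key : (z - z₁)⁻¹ • p.eval z - (z - z₂)⁻¹ • p.eval z
        = ((z₁ - z₂) * ((z - z₁)⁻¹ * (z - z₂)⁻¹)) • p.eval z := by
      rw [← sub_smul]; congr 1; field_simp; ring
    simp only [key, norm_smul, norm_mul, norm_inv]
    have hM0 : 0 ≤ M' := le_trans (norm_nonneg _) (hbd z hz)
    have h5 : ‖p.eval z‖ ≤ M' := hbd z hz
    have e1 : 0 < ‖z - z₁‖ := lt_of_lt_of_le (by linarith) hd1
    have e2 : 0 < ‖z - z₂‖ := lt_of_lt_of_le (by linarith) hd2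
    calc ‖z₁ - z₂‖ * (‖z - z₁‖⁻¹ * ‖z - z₂‖⁻¹) * ‖p.eval z‖
        ≤ ‖z₁ - z₂‖ * ((R/2)⁻¹ * (R/2)⁻¹) * M' := by
          exact mul_le_mul (mul_le_mul_of_nonneg_left
            (mul_le_mul (inv_anti₀ (by linarith) hd1)
              (inv_anti₀ (by linarith) hd2) (by positivity) (by positivity))
            (norm_nonneg _)) h5 (norm_nonneg _) (by positivity)
      _ = M' * ‖z₁ - z₂‖ / (R/2)^2 := by field_simp
  rw [hsub] at hbound
  rw [← smul_sub] at hbound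
  rw [norm_smul] at hbound
  have hnc : ‖(2 * Real.pi * I : ℂ)‖ = 2 * Real.pi := by
    simp [norm_mul, Complex.norm_I, Complex.norm_real, Real.pi_nonneg, _root_.abs_of_nonneg]
  rw [hnc] at hbound
  have hπ : 0 < Real.pi := Real.pi_pos
  have : 2 * Real.pi * R * (M' * ‖z₁ - z₂‖ / (R/2)^2) = 2 * Real.pi * (4 * M' * ‖z₁ - z₂‖ / R) := by
    field_simp; ring
  rw [this] at hbound
  have := le_of_mul_le_mul_left (by linarith [hbound] : 2 * Real.pi * ‖p.eval z₁ - p.eval z₂‖ ≤ 2 * Real.pi * (4 * M' * ‖z₁ - z₂‖ / R)) (by linarith : (0:ℝ) < 2 * Real.pi)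
  exact this



noncomputable def hpoly (p : Polynomial ℂ) : Polynomial ℂ :=
  p.sum fun k a => C a * X ^ (p.natDegree - k) * (C (2⁻¹ : ℂ) * (X ^ 2 + 1)) ^ k

lemma hpoly_eval (p : Polynomial ℂ) (u : ℂ) :
    (hpoly p).eval u = p.sum fun k a => a * u ^ (p.natDegree - k) * ((u ^ 2 + 1)/2) ^ k := by
  unfold hpoly
  rw [Polynomial.sum, Polynomial.eval_finset_sum, Polynomial.sum]
  apply Finset.sum_congr rfl
  intro k _
  simp only [eval_mul, eval_pow, eval_add, eval_one, eval_C, eval_X, div_eq_mul_inv]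
  ring

lemma hpoly_eval_eq (p : Polynomial ℂ) (u : ℂ) (hu : u ≠ 0) :
    (hpoly p).eval u = u ^ p.natDegree * p.eval ((u ^ 2 + 1) / (2 * u)) := by
  rw [hpoly_eval, Polynomial.eval_eq_sum, Polynomial.sum_def, Polynomial.sum_def,
    Finset.mul_sum]
  apply Finset.sum_congr rfl
  intro k hk
  have hkd : k ≤ p.natDegree := p.le_natDegree_of_mem_supp k hk
  have h1 : ((u ^ 2 + 1) / (2 * u)) ^ k = ((u ^ 2 + 1)/2) ^ k * (u ^ k)⁻¹ := by
    rw [← inv_pow, ← mul_pow]; congr 1; field_simp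
  rw [h1, pow_sub₀ u hu hkd]
  ring

lemma hpoly_circle (p : Polynomial ℂ) (M : ℝ)
    (hM : ∀ x : ℝ, |x| ≤ 1 → ‖p.eval (x : ℂ)‖ ≤ M)
    (u : ℂ) (hu : ‖u‖ = 1) : ‖(hpoly p).eval u‖ ≤ M := by
  have hu0 : u ≠ 0 := by intro h; rw [h, norm_zero] at hu; norm_num at hu
  have key : (u ^ 2 + 1) / (2 * u) = ((u.re : ℝ) : ℂ) := by
    have hcc : u * (starRingEnd ℂ) u = 1 := by
      rw [Complex.mul_conj]
      norm_cast
      rw [Complex.normSq_eq_norm_sq, hu]; norm_num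
    have : (starRingEnd ℂ) u = u⁻¹ := by
      field_simp at hcc ⊢
      exact hcc
    have hre : ((u.re : ℝ) : ℂ) = (u + (starRingEnd ℂ) u) / 2 := by
      rw [Complex.add_conj]; push_cast; ring
    rw [hre, this]
    field_simp
  rw [hpoly_eval_eq p u hu0, key, norm_mul, norm_pow, hu, one_pow, one_mul]
  apply hM
  calc |u.re| ≤ ‖u‖ := Complex.abs_re_le_norm u
    _ = 1 := hu



lemma hpoly_disk (p : Polynomial ℂ) (M : ℝ)
    (hM : ∀ x : ℝ, |x| ≤ 1 → ‖p.eval (x : ℂ)‖ ≤ M)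
    (u : ℂ) (hu : ‖u‖ ≤ 1) : ‖(hpoly p).eval u‖ ≤ M := by
  have h1 : IsBounded (ball (0:ℂ) 1) := isBounded_ball
  have h2 : DiffContOnCl ℂ (fun z => (hpoly p).eval z) (ball (0:ℂ) 1) :=
    ((hpoly p).differentiable).diffContOnCl
  have h3 : ∀ z ∈ frontier (ball (0:ℂ) 1), ‖(hpoly p).eval z‖ ≤ M := by
    rw [frontier_ball (0:ℂ) one_ne_zero]
    intro z hz
    rw [mem_sphere, dist_zero_right] at hz
    exact hpoly_circle p M hM z hz
  have h4 : u ∈ closure (ball (0:ℂ) 1) := by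
    rw [closure_ball (0:ℂ) one_ne_zero, mem_closedBall, dist_zero_right]; exact hu
  exact Complex.norm_le_of_forall_mem_frontier_norm_le h1 h2 h3 h4

/-- Growth bound: if `z = (u²+1)/(2u)` with `‖u‖ ≥ 1`, then `‖p z‖ ≤ M ‖u‖^d`. -/
lemma growth_param (p : Polynomial ℂ) (M : ℝ)
    (hM : ∀ x : ℝ, |x| ≤ 1 → ‖p.eval (x : ℂ)‖ ≤ M)
    (u : ℂ) (hu : 1 ≤ ‖u‖) :
    ‖p.eval ((u ^ 2 + 1) / (2 * u))‖ ≤ M * ‖u‖ ^ p.natDegree := by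
  have hu0 : u ≠ 0 := by intro h; rw [h, norm_zero] at hu; norm_num at hu
  have hinv : ‖u⁻¹‖ ≤ 1 := by rw [norm_inv]; exact inv_le_one_of_one_le₀ hu
  have hinv0 : u⁻¹ ≠ 0 := inv_ne_zero hu0
  -- same z for u and u⁻¹
  have hzz : ((u⁻¹) ^ 2 + 1) / (2 * u⁻¹) = (u ^ 2 + 1) / (2 * u) := by
    field_simp
    ring
  have e1 := hpoly_eval_eq p u hu0
  have e2 := hpoly_eval_eq p u⁻¹ hinv0
  rw [hzz] at e2
  have hb := hpoly_disk p M hM u⁻¹ hinv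
  rw [e2] at hb
  rw [norm_mul, norm_pow, norm_inv] at hb
  have hn : (0:ℝ) < ‖u‖ ^ p.natDegree := by positivity
  calc ‖p.eval ((u ^ 2 + 1) / (2 * u))‖
      = ‖u‖⁻¹ ^ p.natDegree * ‖p.eval ((u ^ 2 + 1) / (2 * u))‖ * ‖u‖ ^ p.natDegree := by
        rw [inv_pow]
        have : (‖u‖ ^ p.natDegree)⁻¹ * ‖u‖ ^ p.natDegree = 1 :=
          inv_mul_cancel₀ (ne_of_gt hn)
        rw [mul_comm ((‖u‖ ^ p.natDegree)⁻¹), mul_assoc, this, mul_one]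
    _ ≤ M * ‖u‖ ^ p.natDegree := mul_le_mul_of_nonneg_right hb (le_of_lt hn)



-- pure real inequality
lemma real_ineq (A B t x : ℝ) (hA : 1 ≤ A) (hB : 0 ≤ B) (hAB : A^2 - B^2 = 1)
    (ht : t^2 ≤ 1) (hx : |x| ≤ 1) :
    (A - 1)^2 ≤ (A*t - x)^2 + (1 - t^2)*B^2 := by
  have hx1 : -1 ≤ x := (abs_le.mp hx).1
  have hx2 : x ≤ 1 := (abs_le.mp hx).2
  have ht1 : -1 ≤ t := by nlinarith
  have ht2 : t ≤ 1 := by nlinarith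
  have hA0 : (0:ℝ) < A := by linarith
  rcases le_or_gt 1 (A*t) with h | h
  · have h3 : (A*t - 1)^2 ≤ (A*t - x)^2 := by nlinarith
    nlinarith [sq_nonneg (A - t), sq_nonneg (A + t)]
  rcases le_or_gt (A*t) (-1) with h' | h'
  · have h3 : (A*t + 1)^2 ≤ (A*t - x)^2 := by nlinarith
    nlinarith [sq_nonneg (A + t), sq_nonneg (A - t)]
  · have h5 : A^2 * t^2 ≤ 1 := by nlinarith
    have k1 : A^2 - 1 ≤ A^2*(1 - t^2) := by nlinarith
    have k2 : (A^2 - 1)*B^2 ≤ (A^2*(1 - t^2))*B^2 :=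
      mul_le_mul_of_nonneg_right k1 (sq_nonneg B)
    have k3 : (A-1)^2*A^2 ≤ (A^2 - 1)*B^2 := by
      have hB2 : B^2 = A^2 - 1 := by linarith
      rw [hB2]; nlinarith [sq_nonneg (A-1)]
    have k4 : A^2*(A-1)^2 ≤ A^2*((A*t - x)^2 + (1 - t^2)*B^2) := by
      nlinarith [sq_nonneg (A*t - x), sq_nonneg A]
    exact le_of_mul_le_mul_left k4 (by positivity)

-- geometric lemma: distance from the Joukowski image to a point of [-1,1]
lemma joukowski_dist (u : ℂ) (hu : 1 ≤ ‖u‖) (x : ℝ) (hx : |x| ≤ 1) :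
    ((‖u‖ - 1)^2 / (2 * ‖u‖)) ≤ ‖(u^2 + 1)/(2*u) - (x:ℂ)‖ := by
  set r : ℝ := ‖u‖ with hr
  have hr0 : (0:ℝ) < r := by linarith
  have hu0 : u ≠ 0 := by
    intro h
    rw [hr, h, norm_zero] at hu; norm_num at hu
  set a : ℝ := u.re with ha
  set b : ℝ := u.im with hb
  have hab : a^2 + b^2 = r^2 := by
    rw [hr, ← Complex.normSq_eq_norm_sq, Complex.normSq_apply, ha, hb]; ring
  -- rewrite as a single fraction
  have hw : (u^2 + 1)/(2*u) - (x:ℂ) = (u^2 + 1 - 2*u*(x:ℂ))/(2*u) := by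
    field_simp
  rw [hw, norm_div]
  have hden : ‖(2:ℂ)*u‖ = 2*r := by
    rw [norm_mul, hr]; norm_num
  rw [hden]
  rw [div_le_div_iff₀ (by positivity) (by positivity)]
  -- now suffices: (r-1)^2 ≤ ‖num‖
  have hnum : ‖u^2 + 1 - 2*u*(x:ℂ)‖^2 = (a^2 - b^2 + 1 - 2*a*x)^2 + (2*a*b - 2*b*x)^2 := by
    rw [← Complex.normSq_eq_norm_sq, Complex.normSq_apply]
    simp [Complex.mul_re, Complex.mul_im, pow_two]
    ring
  set A : ℝ := (r^2+1)/(2*r) with hA'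
  set B : ℝ := (r^2-1)/(2*r) with hB'
  set t : ℝ := a/r with ht'
  have hr' : r ≠ 0 := ne_of_gt hr0
  have hA : 1 ≤ A := by
    rw [hA', le_div_iff₀ (by positivity)]; nlinarith [sq_nonneg (r-1)]
  have hB : 0 ≤ B := by
    rw [hB']; apply div_nonneg _ (by positivity); nlinarith
  have hAB : A^2 - B^2 = 1 := by
    rw [hA', hB']; field_simp; ring
  have ht : t^2 ≤ 1 := by
    rw [ht', div_pow, div_le_one (by positivity)]; nlinarith [sq_nonneg b]
  have RI := real_ineq A B t x hA hB hAB ht hx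
  have hb2 : b^2 = r^2 - a^2 := by linarith
  have key : (a^2 - b^2 + 1 - 2*a*x)^2 + (2*a*b - 2*b*x)^2
      = (2*a^2 - r^2 + 1 - 2*a*x)^2 + 4*(r^2-a^2)*(a-x)^2 := by
    linear_combination (4*(a-x)^2 - (2*(a^2+1-2*a*x) - b^2 - r^2 + a^2)) * hb2
  have key2 : (2*a^2 - r^2 + 1 - 2*a*x)^2 + 4*(r^2-a^2)*(a-x)^2
      = 4*r^2*((A*t - x)^2 + (1 - t^2)*B^2) := by
    rw [hA', hB', ht']; field_simp; ring
  have key3 : ((r-1)^2)^2 = 4*r^2*(A - 1)^2 := by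
    rw [hA']; field_simp; ring
  have hsq : ((r-1)^2)^2 ≤ ‖u^2 + 1 - 2*u*(x:ℂ)‖^2 := by
    rw [hnum, key, key2, key3]
    exact mul_le_mul_of_nonneg_left RI (by positivity)
  have hgoal : (r - 1)^2 ≤ ‖u^2 + 1 - 2*u*(x:ℂ)‖ :=
    (pow_le_pow_iff_left₀ (sq_nonneg (r-1)) (norm_nonneg _) two_ne_zero).mp hsq
  exact mul_le_mul_of_nonneg_right hgoal (by positivity)



lemma growth (p : Polynomial ℂ) (M : ℝ)
    (hM : ∀ x : ℝ, |x| ≤ 1 → ‖p.eval (x:ℂ)‖ ≤ M)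
    (z : ℂ) (x : ℝ) (hx : |x| ≤ 1) (δ : ℝ) (hδ0 : 0 < δ) (hδ1 : δ ≤ 1)
    (hz : ‖z - (x:ℂ)‖ ≤ δ) :
    ‖p.eval z‖ ≤ M * (1 + 3*Real.sqrt δ)^p.natDegree := by
  -- find u with u² + 1 = 2zu and ‖u‖ ≥ 1
  obtain ⟨u₀, hroot⟩ : ∃ u : ℂ, (C 1 * X^2 + C (-(2*z)) * X + C 1).IsRoot u := by
    apply Complex.exists_root
    rw [Polynomial.degree_quadratic one_ne_zero]
    norm_num
  have hu₀ : u₀^2 + 1 = 2*z*u₀ := by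
    have := hroot
    simp [Polynomial.IsRoot, Polynomial.eval_add, Polynomial.eval_mul] at this
    linear_combination this
  have hu₀0 : u₀ ≠ 0 := by
    intro h; rw [h] at hu₀; simp at hu₀
  obtain ⟨u, hequ, hu1⟩ : ∃ u : ℂ, u^2 + 1 = 2*z*u ∧ 1 ≤ ‖u‖ := by
    rcases le_or_gt 1 ‖u₀‖ with h | h
    · exact ⟨u₀, hu₀, h⟩
    · refine ⟨u₀⁻¹, ?_, ?_⟩
      · field_simp
        linear_combination hu₀
      · rw [norm_inv]
        have h0 : 0 < ‖u₀‖ := norm_pos_iff.mpr hu₀0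
        exact (one_le_inv₀ h0).mpr h.le
  have hu0 : u ≠ 0 := by
    intro h; rw [h, norm_zero] at hu1; norm_num at hu1
  have hzu : z = (u^2 + 1)/(2*u) := by
    rw [eq_div_iff (by simp [hu0])]
    linear_combination hequ.symm
  set r : ℝ := ‖u‖ with hr
  have jd := joukowski_dist u hu1 x hx
  rw [← hzu] at jd
  have h2 : (r - 1)^2 ≤ 2*r*δ := by
    have := le_trans jd hz
    rw [div_le_iff₀ (by positivity)] at this
    linarith
  have hr4 : r ≤ 4 := by nlinarith
  have h3 : r - 1 ≤ 3*Real.sqrt δ := by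
    have h9 : (r-1)^2 ≤ (3*Real.sqrt δ)^2 := by
      rw [mul_pow, Real.sq_sqrt hδ0.le]; nlinarith
    exact (pow_le_pow_iff_left₀ (by linarith) (by positivity) two_ne_zero).mp h9
  have hM0 : 0 ≤ M := le_trans (norm_nonneg _) (hM 0 (by norm_num))
  calc ‖p.eval z‖ = ‖p.eval ((u^2+1)/(2*u))‖ := by rw [← hzu]
    _ ≤ M * r ^ p.natDegree := growth_param p M hM u hu1
    _ ≤ M * (1 + 3*Real.sqrt δ)^p.natDegree := by
        apply mul_le_mul_of_nonneg_left _ hM0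
        exact pow_le_pow_left₀ (by positivity) (by linarith) _



end PaturiAux

set_option maxHeartbeats 2000000 in
/-- Weak form of Paturi's theorem: under the same hypotheses, `d = Ω(√(b - a))`. -/
theorem paturi_weak (c : ℝ) (hc : 0 < c) :
    ∃ C : ℝ, 0 < C ∧ ∀ (q : Polynomial ℝ) (d : ℕ) (a b : ℤ) (ξ : ℝ),
      q.natDegree = d → a < b → (a : ℝ) ≤ ξ → ξ ≤ (b : ℝ) →
      (∀ i : ℤ, a ≤ i → i ≤ b → |q.eval (i : ℝ)| ≤ 1) →
      c ≤ |q.eval ((⌊ξ⌋ : ℤ) : ℝ) - q.eval ξ| →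
      C * Real.sqrt ((b : ℝ) - (a : ℝ)) ≤ (d : ℝ) := by
  set K : ℝ := 168 + 336/c with hK'
  have hK0 : 0 < K := by positivity
  have hK168 : 168 ≤ K := by
    rw [hK']
    have : 0 < 336/c := by positivity
    linarith
  refine ⟨1/Real.sqrt K, by positivity, ?_⟩
  intro q d a b ξ hdeg hab haξ hξb hsamp hjump
  -- d ≥ 1
  have hd1 : 1 ≤ d := by
    by_contra h
    push_neg at h
    interval_cases d
    · have hq : q = C (q.coeff 0) := Polynomial.eq_C_of_natDegree_eq_zero hdeg
      rw [hq] at hjump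
      simp at hjump
      linarith
  have hD1 : (1:ℝ) ≤ (d:ℝ) := by exact_mod_cast hd1
  by_contra hcon
  push_neg at hcon
  set n : ℝ := (b:ℝ) - (a:ℝ) with hn'
  have hn0 : 0 < n := by
    have : (a:ℝ) < (b:ℝ) := by exact_mod_cast hab
    simp [hn']; linarith
  have hKd : K * (d:ℝ)^2 < n := by
    have h1 : Real.sqrt K * (d:ℝ) < Real.sqrt n := by
      rw [div_mul_eq_mul_div, lt_div_iff₀ (by positivity)] at hcon
      nlinarith [Real.sqrt_nonneg K, Real.sqrt_nonneg n]
    have h2 : (Real.sqrt K * (d:ℝ))^2 < (Real.sqrt n)^2 := by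
      have h0 : 0 ≤ Real.sqrt K * (d:ℝ) := by positivity
      nlinarith
    rw [Real.sq_sqrt hn0.le, mul_pow, Real.sq_sqrt hK0.le] at h2
    exact h2
  have hn168 : 168 * (d:ℝ)^2 < n := by nlinarith [sq_nonneg (d:ℝ), hK168]
  -- normalization
  set μ : ℝ := ((a:ℝ) + (b:ℝ))/2 with hμ'
  set l : ℝ := n/2 with hl'
  have hl0 : 0 < l := by positivity
  set p : Polynomial ℂ := (q.map (algebraMap ℝ ℂ)).comp
      (Polynomial.C (l:ℂ) * X + Polynomial.C (μ:ℂ)) with hp'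
  have hmapdeg : (q.map (algebraMap ℝ ℂ)).natDegree = d := by
    rw [Polynomial.natDegree_map_eq_of_injective (algebraMap ℝ ℂ).injective, hdeg]
  have hpdeg : p.natDegree = d := by
    rw [hp', Polynomial.natDegree_comp, hmapdeg,
      Polynomial.natDegree_linear (by exact_mod_cast ne_of_gt hl0), mul_one]
  have hpev : ∀ y : ℝ, p.eval ((y:ℝ):ℂ) = ((q.eval (l*y + μ) : ℝ) : ℂ) := by
    intro y
    rw [hp', Polynomial.eval_comp]
    have h1 : (Polynomial.C (l:ℂ) * X + Polynomial.C (μ:ℂ)).eval ((y:ℝ):ℂ)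
        = (((l*y + μ : ℝ)):ℂ) := by
      simp only [Polynomial.eval_add, Polynomial.eval_mul, Polynomial.eval_C, Polynomial.eval_X]
      push_cast
      ring
    rw [h1, Polynomial.eval_map, show (((l*y + μ : ℝ)):ℂ) = algebraMap ℝ ℂ (l*y+μ) from rfl]
    all_goals try rw [Polynomial.eval₂_at_apply]
    all_goals rfl
  -- max of |p| on [-1,1]
  have hcont : Continuous fun x : ℝ => ‖p.eval ((x:ℝ):ℂ)‖ :=
    ((p.continuous).comp Complex.continuous_ofReal).norm
  obtain ⟨xs, hxsmem, hxsmax⟩ := (isCompact_Icc : IsCompact (Icc (-1:ℝ) 1)).exists_isMaxOn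
    ⟨0, by norm_num⟩ hcont.continuousOn
  set M : ℝ := ‖p.eval ((xs:ℝ):ℂ)‖ with hM'
  have hM : ∀ x : ℝ, |x| ≤ 1 → ‖p.eval ((x:ℝ):ℂ)‖ ≤ M := by
    intro x hx
    exact hxsmax (abs_le.mp hx)
  have hM0 : 0 ≤ M := norm_nonneg _
  -- samples
  have hsamp' : ∀ k : ℤ, a ≤ k → k ≤ b → ‖p.eval (((((k:ℝ) - μ)/l : ℝ)):ℂ)‖ ≤ 1 := by
    intro k hka hkb
    rw [hpev]
    have : l * (((k:ℝ) - μ)/l) + μ = (k:ℝ) := by field_simp; ring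
    rw [this, Complex.norm_real]
    exact hsamp k hka hkb
  -- radius
  set R : ℝ := 1/(d:ℝ)^2 with hR'
  have hR0 : 0 < R := by positivity
  have hR1 : R ≤ 1 := by
    rw [hR', div_le_one (by positivity)]
    nlinarith
  have hsqrtR : Real.sqrt R = 1/(d:ℝ) := by
    rw [hR']
    rw [show (1:ℝ)/(d:ℝ)^2 = (1/(d:ℝ))^2 by ring]
    exact Real.sqrt_sq (by positivity)
  -- circle bound
  have hcirc : ∀ x₀ : ℝ, |x₀| ≤ 1 → ∀ z ∈ sphere ((x₀:ℝ):ℂ) R, ‖p.eval z‖ ≤ 21*M := by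
    intro x₀ hx₀ z hz
    rw [mem_sphere, dist_eq_norm] at hz
    have hg := growth p M hM z x₀ hx₀ R hR0 hR1 (le_of_eq hz)
    have hgrow : (1 + 3*Real.sqrt R)^p.natDegree ≤ 21 := by
      rw [hsqrtR, hpdeg]
      have e1 : 1 + 3*(1/(d:ℝ)) ≤ Real.exp (3/(d:ℝ)) := by
        have := Real.add_one_le_exp (3/(d:ℝ))
        rw [show 3*(1/(d:ℝ)) = 3/(d:ℝ) by ring]
        linarith
      have e2 : (1 + 3*(1/(d:ℝ)))^d ≤ (Real.exp (3/(d:ℝ)))^d := by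
        apply pow_le_pow_left₀ (by positivity) e1
      have e3 : (Real.exp (3/(d:ℝ)))^d = Real.exp 3 := by
        rw [← Real.exp_nat_mul]
        congr 1
        field_simp
      have e4 : Real.exp 3 ≤ 21 := by
        have h1 : Real.exp 1 < 2.7182818286 := Real.exp_one_lt_d9
        have h3 : Real.exp 3 = (Real.exp 1)^3 := by
          rw [← Real.exp_nat_mul]; norm_num
        have h5 : (Real.exp 1)^3 < (2.7182818286)^3 :=
          pow_lt_pow_left₀ h1 (Real.exp_pos 1).le (by norm_num)
        rw [h3]
        nlinarith [h5]
      calc (1 + 3*(1/(d:ℝ)))^d ≤ (Real.exp (3/(d:ℝ)))^d := e2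
        _ = Real.exp 3 := e3
        _ ≤ 21 := e4
    calc ‖p.eval z‖ ≤ M * (1 + 3*Real.sqrt R)^p.natDegree := hg
      _ ≤ M * 21 := mul_le_mul_of_nonneg_left hgrow hM0
      _ = 21*M := by ring
  -- generic two-point bound around a center in [-1,1]
  have htp : ∀ x₀ : ℝ, |x₀| ≤ 1 → ∀ z₁ z₂ : ℂ, ‖z₁ - ((x₀:ℝ):ℂ)‖ ≤ R/2 →
      ‖z₂ - ((x₀:ℝ):ℂ)‖ ≤ R/2 →
      ‖p.eval z₁ - p.eval z₂‖ ≤ 84 * M * ‖z₁ - z₂‖ * (d:ℝ)^2 := by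
    intro x₀ hx₀ z₁ z₂ h₁ h₂
    have := twoPoint p ((x₀:ℝ):ℂ) R (21*M) hR0 (hcirc x₀ hx₀) z₁ z₂ h₁ h₂
    calc ‖p.eval z₁ - p.eval z₂‖ ≤ 4*(21*M)*‖z₁ - z₂‖/R := this
      _ = 84 * M * ‖z₁ - z₂‖ * (d:ℝ)^2 := by
          rw [hR', div_eq_mul_inv, one_div, inv_inv]; ring
  -- bootstrap: M ≤ 2
  have hInt : ∀ x : ℝ, x ∈ Icc (-1:ℝ) 1 → ∃ k : ℤ, a ≤ k ∧ k ≤ b ∧ |l*x + μ - k| ≤ 1/2 := by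
    intro x hx
    obtain ⟨hx1, hx2⟩ := hx
    set y : ℝ := l*x + μ with hy'
    have hya : (a:ℝ) ≤ y := by
      rw [hy', hl', hμ', hn']; nlinarith
    have hyb : y ≤ (b:ℝ) := by
      rw [hy', hl', hμ', hn']; nlinarith
    refine ⟨round y, ?_, ?_, ?_⟩
    · have h1 : (a:ℝ) - 1/2 ≤ (round y : ℝ) := by
        have := abs_sub_round y
        have h2 : |y - round y| ≤ 1/2 := this
        cases' abs_le.mp h2 with h3 h4
        linarith
      have : (a:ℝ) - 1 < (round y : ℝ) := by linarith
      have : a - 1 < round y := by exact_mod_cast this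
      omega
    · have h1 : (round y : ℝ) ≤ (b:ℝ) + 1/2 := by
        have h2 := abs_sub_round y
        cases' abs_le.mp h2 with h3 h4
        linarith
      have : (round y : ℝ) < (b:ℝ) + 1 := by linarith
      have : round y < b + 1 := by exact_mod_cast this
      omega
    · exact abs_sub_round y
  have hboot : ∀ x : ℝ, x ∈ Icc (-1:ℝ) 1 → ‖p.eval ((x:ℝ):ℂ)‖ ≤ 1 + 84*M*(d:ℝ)^2/n := by
    intro x hx
    obtain ⟨k, hka, hkb, hknear⟩ := hInt x hx
    set w : ℝ := ((k:ℝ) - μ)/l with hw'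
    have hxw : x - w = (l*x + μ - (k:ℝ))/l := by
      rw [hw']; field_simp; ring
    have hdist : |x - w| ≤ 1/n := by
      rw [hxw, abs_div, abs_of_pos hl0, div_le_div_iff₀ hl0 hn0]
      have := abs_le.mp hknear
      rw [hl']
      nlinarith [abs_nonneg (l*x + μ - (k:ℝ)), abs_le.mpr this]
    have hdistC : ‖((x:ℝ):ℂ) - ((w:ℝ):ℂ)‖ ≤ 1/n := by
      rw [← Complex.ofReal_sub, Complex.norm_real]
      exact hdist
    have hhalf : (1:ℝ)/n ≤ R/2 := by
      have e : R/2 = 1/(2*(d:ℝ)^2) := by rw [hR']; ring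
      rw [e, div_le_div_iff₀ hn0 (by positivity)]
      nlinarith
    have hx1 : |x| ≤ 1 := abs_le.mpr ⟨hx.1, hx.2⟩
    have htp2 := htp x hx1 ((w:ℝ):ℂ) ((x:ℝ):ℂ)
      (by rw [show ((w:ℝ):ℂ) - ((x:ℝ):ℂ) = -(((x:ℝ):ℂ) - ((w:ℝ):ℂ)) by ring, norm_neg]
          exact le_trans hdistC hhalf)
      (by simp; positivity)
    have hw1 : ‖p.eval (((w:ℝ)):ℂ)‖ ≤ 1 := by
      rw [hw']
      exact hsamp' k hka hkb
    have hnormw : ‖((w:ℝ):ℂ) - ((x:ℝ):ℂ)‖ ≤ 1/n := by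
      rw [show ((w:ℝ):ℂ) - ((x:ℝ):ℂ) = -(((x:ℝ):ℂ) - ((w:ℝ):ℂ)) by ring, norm_neg]
      exact hdistC
    calc ‖p.eval ((x:ℝ):ℂ)‖
        ≤ ‖p.eval (((w:ℝ)):ℂ)‖ + ‖p.eval (((w:ℝ)):ℂ) - p.eval ((x:ℝ):ℂ)‖ := by
          have := norm_sub_norm_le (p.eval (((w:ℝ)):ℂ) - p.eval ((x:ℝ):ℂ)) (p.eval (((w:ℝ)):ℂ))
          have h0 := norm_add_le (p.eval (((w:ℝ)):ℂ)) (p.eval ((x:ℝ):ℂ) - p.eval (((w:ℝ)):ℂ))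
          have e : p.eval (((w:ℝ)):ℂ) + (p.eval ((x:ℝ):ℂ) - p.eval (((w:ℝ)):ℂ)) = p.eval ((x:ℝ):ℂ) := by ring
          rw [e] at h0
          have e2 : ‖p.eval ((x:ℝ):ℂ) - p.eval (((w:ℝ)):ℂ)‖ = ‖p.eval (((w:ℝ)):ℂ) - p.eval ((x:ℝ):ℂ)‖ := by
            rw [show p.eval ((x:ℝ):ℂ) - p.eval (((w:ℝ)):ℂ) = -(p.eval (((w:ℝ)):ℂ) - p.eval ((x:ℝ):ℂ)) by ring, norm_neg]
          linarith [h0, e2.le]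
      _ ≤ 1 + 84*M*(1/n)*(d:ℝ)^2 := by
          have hb : 84*M*‖((w:ℝ):ℂ) - ((x:ℝ):ℂ)‖*(d:ℝ)^2 ≤ 84*M*(1/n)*(d:ℝ)^2 := by
            apply mul_le_mul_of_nonneg_right _ (by positivity)
            exact mul_le_mul_of_nonneg_left hnormw (by positivity)
          linarith [hw1, htp2, hb]
      _ = 1 + 84*M*(d:ℝ)^2/n := by ring
  -- conclude M ≤ 2
  have hMle : M ≤ 1 + 84*M*(d:ℝ)^2/n := hboot xs hxsmem
  have hM2 : M ≤ 2 := by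
    have h84 : 84*(d:ℝ)^2/n ≤ 1/2 := by
      rw [div_le_div_iff₀ hn0 (by norm_num : (0:ℝ) < 2)]
      nlinarith
    have : 84*M*(d:ℝ)^2/n = M * (84*(d:ℝ)^2/n) := by ring
    rw [this] at hMle
    nlinarith [mul_le_mul_of_nonneg_left h84 hM0]
  -- the jump
  set m : ℤ := ⌊ξ⌋ with hm'
  have hma : a ≤ m := Int.le_floor.mpr haξ
  have hmb : m ≤ b := by
    have h1 : (m:ℝ) ≤ ξ := Int.floor_le ξ
    have : (m:ℝ) ≤ (b:ℝ) := le_trans h1 hξb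
    exact_mod_cast this
  set x₀ : ℝ := ((m:ℝ) - μ)/l with hx₀'
  set z₂ : ℝ := (ξ - μ)/l with hz₂'
  have hx₀1 : |x₀| ≤ 1 := by
    rw [hx₀', abs_div, abs_of_pos hl0, div_le_one hl0, hl', hμ', hn']
    rw [abs_le]
    have h1 : (a:ℝ) ≤ (m:ℝ) := by exact_mod_cast hma
    have h2 : (m:ℝ) ≤ (b:ℝ) := by exact_mod_cast hmb
    constructor <;> nlinarith
  have hfl1 : ξ - (m:ℝ) ≤ 1 := by
    have := Int.lt_floor_add_one ξ
    rw [hm']; push_cast; linarith [this]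
  have hfl0 : 0 ≤ ξ - (m:ℝ) := by
    have := Int.floor_le ξ
    rw [hm']; linarith [this]
  have hdist2 : |z₂ - x₀| ≤ 2/n := by
    have e : z₂ - x₀ = (ξ - (m:ℝ))/l := by
      rw [hz₂', hx₀', div_sub_div_same, sub_sub_sub_cancel_right]
    rw [e, abs_div, abs_of_pos hl0, div_le_div_iff₀ hl0 hn0, hl', _root_.abs_of_nonneg hfl0]
    nlinarith
  have hdist2C : ‖((z₂:ℝ):ℂ) - ((x₀:ℝ):ℂ)‖ ≤ 2/n := by
    rw [← Complex.ofReal_sub, Complex.norm_real]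
    exact hdist2
  have hhalf2 : (2:ℝ)/n ≤ R/2 := by
    have e : R/2 = 1/(2*(d:ℝ)^2) := by rw [hR']; ring
    rw [e, div_le_div_iff₀ hn0 (by positivity)]
    nlinarith
  have htp3 := htp x₀ hx₀1 ((x₀:ℝ):ℂ) ((z₂:ℝ):ℂ) (by simp; positivity) (le_trans hdist2C hhalf2)
  -- identify evaluations
  have hev1 : p.eval ((x₀:ℝ):ℂ) = ((q.eval ((m:ℝ)) : ℝ) : ℂ) := by
    rw [hpev]
    congr 2
    rw [hx₀']; field_simp; ring
  have hev2 : p.eval ((z₂:ℝ):ℂ) = ((q.eval ξ : ℝ) : ℂ) := by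
    rw [hpev]
    congr 2
    rw [hz₂']; field_simp; ring
  have hjump2 : c ≤ ‖p.eval ((x₀:ℝ):ℂ) - p.eval ((z₂:ℝ):ℂ)‖ := by
    rw [hev1, hev2, ← Complex.ofReal_sub, Complex.norm_real]
    exact hjump
  have hnorm3 : ‖((x₀:ℝ):ℂ) - ((z₂:ℝ):ℂ)‖ ≤ 2/n := by
    rw [show ((x₀:ℝ):ℂ) - ((z₂:ℝ):ℂ) = -(((z₂:ℝ):ℂ) - ((x₀:ℝ):ℂ)) by ring, norm_neg]
    exact hdist2C
  have hfinal : c ≤ 336*(d:ℝ)^2/n := by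
    have hb2 : 84*M*‖((x₀:ℝ):ℂ) - ((z₂:ℝ):ℂ)‖*(d:ℝ)^2 ≤ 84*2*(2/n)*(d:ℝ)^2 := by
      have s1 : 84*M*‖((x₀:ℝ):ℂ) - ((z₂:ℝ):ℂ)‖ ≤ 84*2*(2/n) := by
        have r1 : M*‖((x₀:ℝ):ℂ) - ((z₂:ℝ):ℂ)‖ ≤ 2*(2/n) :=
          mul_le_mul hM2 hnorm3 (norm_nonneg _) (by norm_num)
        nlinarith
      apply mul_le_mul_of_nonneg_right s1 (by positivity)
    calc c ≤ ‖p.eval ((x₀:ℝ):ℂ) - p.eval ((z₂:ℝ):ℂ)‖ := hjump2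
      _ ≤ 84*M*‖((x₀:ℝ):ℂ) - ((z₂:ℝ):ℂ)‖*(d:ℝ)^2 := htp3
      _ ≤ 84*2*(2/n)*(d:ℝ)^2 := hb2
      _ = 336*(d:ℝ)^2/n := by ring
  -- contradiction
  have hlt : 336*(d:ℝ)^2/n < c := by
    rw [div_lt_iff₀ hn0]
    have h1 : (336/c)*(d:ℝ)^2 < n := by
      rw [hK'] at hKd
      nlinarith [sq_nonneg (d:ℝ)]
    have h2 : 336*(d:ℝ)^2 < c*n := by
      have := mul_lt_mul_of_pos_left h1 hc
      calc 336*(d:ℝ)^2 = c*((336/c)*(d:ℝ)^2) := by field_simp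
        _ < c*n := this
    linarith
  linarith
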